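/- Let E and F be Banach lattices with quasi-interior points x_0 and y_0 respectively. Then x_0 ⊗ y_0 is a quasi-interior point of the Fremlin projective tensor product E ⊗̂ F. -/

import Mathlib

open Filter Topology

/-- The sublattice-submodule of `G` generated by a set `s`. -/
def latticeSpan {G : Type*} [Lattice G] [AddCommGroup G] [Module ℝ G] (s : Set G) : Set G :=
  {x | ∀ p : Submodule ℝ G, s ⊆ p → (∀ a ∈ (p : Set G), ∀ b ∈ (p : Set G), a ⊔ b ∈ p) → x ∈ p}

/-- `t` realizes the Banach lattice `G` as the Fremlin projective tensor
product `E ⊗̂ F`: a bilinear lattice bimorphism whose norm is the (cross)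
Fremlin projective norm and whose image spans a dense subspace, satisfying
Fremlin's lattice estimate. -/
structure IsFremlinProjTensor (E F G : Type*)
    [NormedAddCommGroup E] [Lattice E] [HasSolidNorm E] [IsOrderedAddMonoid E] [NormedSpace ℝ E]
    [NormedAddCommGroup F] [Lattice F] [HasSolidNorm F] [IsOrderedAddMonoid F] [NormedSpace ℝ F]
    [NormedAddCommGroup G] [Lattice G] [HasSolidNorm G] [IsOrderedAddMonoid G] [NormedSpace ℝ G] [CompleteSpace G]
    (t : E →ₗ[ℝ] F →ₗ[ℝ] G) : Prop where
  abs_tensor : ∀ x y, |t x y| = t |x| |y|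
  pos_pos : ∀ x y, 0 < x → 0 < y → 0 < t x y
  inf_tensor_le : ∀ x₀ x₁ y₀ y₁, 0 ≤ x₀ → 0 ≤ x₁ → 0 ≤ y₀ → 0 ≤ y₁ →
    (t x₀ y₀ ⊓ t x₁ y₁) ≤ t (x₀ ⊓ x₁) (y₀ ⊔ y₁)
  cross_norm : ∀ x y, ‖t x y‖ = ‖x‖ * ‖y‖
  dense_span : Dense (Submodule.span ℝ (Set.image2 (fun x y => t x y) Set.univ Set.univ) : Set G)

/-- `u` is a quasi-interior point of the Banach lattice `G`: `u ≥ 0` and for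
every `x ≥ 0`, `x ⊓ n•u → x` in norm (equivalently, the ideal generated by `u`
is norm dense). -/
def QuasiInteriorPoint {G : Type*} [NormedAddCommGroup G] [Lattice G] [HasSolidNorm G] [IsOrderedAddMonoid G] (u : G) : Prop :=
  0 ≤ u ∧ ∀ x : G, 0 ≤ x → Tendsto (fun n : ℕ => x ⊓ n • u) atTop (nhds x)

/-- `P` is a band projection on the vector lattice `G`. -/
structure IsBandProjection {G : Type*} [Lattice G] [AddCommGroup G] [Module ℝ G]
    (P : G →ₗ[ℝ] G) : Prop where
  idem : ∀ x, P (P x) = P x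
  pos : ∀ x, 0 ≤ x → 0 ≤ P x
  proj_le : ∀ x, 0 ≤ x → P x ≤ x
  disj : ∀ x, |P x| ⊓ |x - P x| = 0

section AuxSmul

variable {G : Type*} [NormedAddCommGroup G] [Lattice G] [HasSolidNorm G] [IsOrderedAddMonoid G] [NormedSpace ℝ G]

lemma aux_pow2_nonneg : ∀ (k : ℕ) {y : G}, 0 ≤ (2 ^ k) • y → 0 ≤ y := by
  intro k
  induction k with
  | zero => intro y h; simpa using h
  | succ k ih =>
    intro y h
    have h2 : (2 ^ (k + 1)) • y = (2 ^ k) • (2 • y) := by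
      rw [pow_succ, mul_nsmul]
      exact smul_comm _ _ _
    rw [h2] at h
    exact nsmul_two_semiclosed (ih h)

lemma aux_smul_nonneg {c : ℝ} (hc : 0 ≤ c) {x : G} (hx : 0 ≤ x) : 0 ≤ c • x := by
  have key : ∀ k : ℕ, 0 ≤ ((⌈c * 2 ^ k⌉₊ : ℝ) / 2 ^ k) • x := by
    intro k
    apply aux_pow2_nonneg k
    have h2 : ((2 : ℝ) ^ k) ≠ 0 := by positivity
    have : ((2 ^ k : ℕ)) • (((⌈c * 2 ^ k⌉₊ : ℝ) / 2 ^ k) • x)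
        = (⌈c * 2 ^ k⌉₊ : ℕ) • x := by
      rw [← Nat.cast_smul_eq_nsmul ℝ (2 ^ k), smul_smul, ← Nat.cast_smul_eq_nsmul ℝ ⌈c * 2 ^ k⌉₊]
      congr 1
      push_cast
      field_simp
    rw [this]
    exact nsmul_nonneg hx _
  have hlim : Tendsto (fun k : ℕ => ((⌈c * 2 ^ k⌉₊ : ℝ) / 2 ^ k)) atTop (nhds c) := by
    have hlow : ∀ k : ℕ, c ≤ (⌈c * 2 ^ k⌉₊ : ℝ) / 2 ^ k := by
      intro k
      rw [le_div_iff₀ (by positivity)]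
      exact Nat.le_ceil _
    have hup : ∀ k : ℕ, (⌈c * 2 ^ k⌉₊ : ℝ) / 2 ^ k ≤ c + (1 / 2) ^ k := by
      intro k
      rw [div_le_iff₀ (by positivity)]
      have h1 : (⌈c * 2 ^ k⌉₊ : ℝ) < c * 2 ^ k + 1 :=
        Nat.ceil_lt_add_one (by positivity)
      have h2 : (c + (1 / 2 : ℝ) ^ k) * 2 ^ k = c * 2 ^ k + 1 := by
        rw [add_mul, ← mul_pow]; norm_num
      rw [h2]
      exact h1.le
    have hub : Tendsto (fun k : ℕ => c + (1 / 2 : ℝ) ^ k) atTop (nhds c) := by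
      have h0 : Tendsto (fun k : ℕ => ((1 / 2 : ℝ)) ^ k) atTop (nhds 0) :=
        tendsto_pow_atTop_nhds_zero_of_lt_one (by norm_num) (by norm_num)
      have := (tendsto_const_nhds : Tendsto (fun _ : ℕ => c) atTop (nhds c)).add h0
      simpa using this
    exact tendsto_of_tendsto_of_tendsto_of_le_of_le tendsto_const_nhds hub hlow hup
  have hconv : Tendsto (fun k : ℕ => ((⌈c * 2 ^ k⌉₊ : ℝ) / 2 ^ k) • x) atTop (nhds (c • x)) :=
    hlim.smul_const x
  exact isClosed_nonneg.mem_of_tendsto hconv (Eventually.of_forall key)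

lemma aux_smul_le_smul {c : ℝ} (hc : 0 ≤ c) {a b : G} (h : a ≤ b) : c • a ≤ c • b := by
  have := aux_smul_nonneg hc (sub_nonneg.2 h)
  rw [smul_sub] at this
  exact sub_nonneg.1 this

lemma aux_smul_le_abs (c : ℝ) (z : G) : c • z ≤ |c| • |z| := by
  rcases le_total 0 c with hc | hc
  · rw [abs_of_nonneg hc]
    exact aux_smul_le_smul hc (le_abs_self z)
  · rw [abs_of_nonpos hc]
    have : (-c) • (-z) = c • z := by rw [neg_smul, smul_neg, neg_neg]
    rw [← this]
    exact aux_smul_le_smul (by linarith) ((le_abs_self (-z)).trans_eq (abs_neg z))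

lemma aux_abs_smul_le (c : ℝ) (z : G) : |c • z| ≤ |c| • |z| := by
  rw [abs_le']
  refine ⟨aux_smul_le_abs c z, ?_⟩
  have := aux_smul_le_abs c (-z)
  rwa [smul_neg, abs_neg] at this

end AuxSmul

/-- if `x₀` and `y₀` are quasi-interior points of the Banach
lattices `E` and `F`, then `x₀ ⊗ y₀` is a quasi-interior point of the Fremlin
projective tensor product `E ⊗̂ F`. -/
theorem quasiInterior_tensor
    {E F G : Type*}
    [NormedAddCommGroup E] [Lattice E] [HasSolidNorm E] [IsOrderedAddMonoid E] [NormedSpace ℝ E] [CompleteSpace E]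
    [NormedAddCommGroup F] [Lattice F] [HasSolidNorm F] [IsOrderedAddMonoid F] [NormedSpace ℝ F] [CompleteSpace F]
    [NormedAddCommGroup G] [Lattice G] [HasSolidNorm G] [IsOrderedAddMonoid G] [NormedSpace ℝ G] [CompleteSpace G]
    (t : E →ₗ[ℝ] F →ₗ[ℝ] G) (ht : IsFremlinProjTensor E F G t)
    (x₀ : E) (hx₀ : QuasiInteriorPoint x₀) (y₀ : F) (hy₀ : QuasiInteriorPoint y₀) :
    QuasiInteriorPoint (t x₀ y₀) := by
  set u : G := t x₀ y₀ with hu_def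
  -- positivity of t on positive elements
  have tpos : ∀ (x : E) (y : F), 0 ≤ x → 0 ≤ y → 0 ≤ t x y := by
    intro x y hx hy
    have h := ht.abs_tensor x y
    rw [abs_of_nonneg hx, abs_of_nonneg hy] at h
    rw [← h]
    exact abs_nonneg _
  have hu : 0 ≤ u := tpos x₀ y₀ hx₀.1 hy₀.1
  -- monotonicity of t on positive elements
  have tmono : ∀ {a a' : E} {b b' : F}, 0 ≤ a → a ≤ a' → 0 ≤ b → b ≤ b' →
      t a b ≤ t a' b' := by
    intro a a' b b' ha haa hb hbb
    have h1 : t a b ≤ t a' b := by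
      have : 0 ≤ t (a' - a) b := tpos _ _ (sub_nonneg.2 haa) hb
      rw [map_sub, LinearMap.sub_apply] at this
      exact sub_nonneg.1 this
    have h2 : t a' b ≤ t a' b' := by
      have : 0 ≤ t a' (b' - b) := tpos _ _ (ha.trans haa) (sub_nonneg.2 hbb)
      rw [map_sub] at this
      exact sub_nonneg.1 this
    exact h1.trans h2
  -- the ideal generated by u, as a submodule
  let I : Submodule ℝ G :=
    { carrier := {z : G | ∃ n : ℕ, |z| ≤ n • u}
      zero_mem' := ⟨0, by simp⟩
      add_mem' := by
        rintro a b ⟨n, hn⟩ ⟨m, hm⟩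
        exact ⟨n + m, (abs_add_le a b).trans (by rw [add_nsmul]; exact add_le_add hn hm)⟩
      smul_mem' := by
        rintro c z ⟨n, hn⟩
        refine ⟨⌈|c|⌉₊ * n, ?_⟩
        calc |c • z| ≤ |c| • |z| := aux_abs_smul_le c z
          _ ≤ |c| • (n • u) := aux_smul_le_smul (abs_nonneg c) hn
          _ ≤ (⌈|c|⌉₊ : ℝ) • (n • u) := by
              have h0 : 0 ≤ ((⌈|c|⌉₊ : ℝ) - |c|) • (n • u) :=
                aux_smul_nonneg (sub_nonneg.2 (Nat.le_ceil _)) (nsmul_nonneg hu n)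
              rw [sub_smul] at h0
              exact sub_nonneg.1 h0
          _ = (⌈|c|⌉₊ * n) • u := by
              rw [Nat.cast_smul_eq_nsmul, mul_comm, mul_nsmul]
          }
  let J : Submodule ℝ G := I.topologicalClosure
  have hJc : (J : Set G) = closure (I : Set G) := Submodule.topologicalClosure_coe I
  -- positive elementary tensors lie in the closure of the ideal
  have step1 : ∀ (x : E) (y : F), 0 ≤ x → 0 ≤ y → t x y ∈ J := by
    intro x y hx hy
    have hmemI : ∀ n : ℕ, t (x ⊓ n • x₀) (y ⊓ n • y₀) ∈ (I : Set G) := by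
      intro n
      have ha0 : 0 ≤ x ⊓ n • x₀ := le_inf hx (nsmul_nonneg hx₀.1 n)
      have hb0 : 0 ≤ y ⊓ n • y₀ := le_inf hy (nsmul_nonneg hy₀.1 n)
      refine ⟨n * n, ?_⟩
      rw [abs_of_nonneg (tpos _ _ ha0 hb0)]
      have h1 : t (x ⊓ n • x₀) (y ⊓ n • y₀) ≤ t (n • x₀) (n • y₀) :=
        tmono ha0 inf_le_right hb0 inf_le_right
      have h2 : t (n • x₀) (n • y₀) = (n * n) • u := by
        rw [map_nsmul t n x₀, LinearMap.smul_apply, map_nsmul (t x₀) n y₀, mul_nsmul]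
      rw [h2] at h1
      exact h1
    -- convergence of the truncated tensors
    have hax : Tendsto (fun n : ℕ => x ⊓ n • x₀) atTop (nhds x) := hx₀.2 x hx
    have hby : Tendsto (fun n : ℕ => y ⊓ n • y₀) atTop (nhds y) := hy₀.2 y hy
    have hconv : Tendsto (fun n : ℕ => t (x ⊓ n • x₀) (y ⊓ n • y₀)) atTop (nhds (t x y)) := by
      rw [tendsto_iff_norm_sub_tendsto_zero]
      have hbound : ∀ n : ℕ,
          ‖t (x ⊓ n • x₀) (y ⊓ n • y₀) - t x y‖ ≤
            ‖x ⊓ n • x₀ - x‖ * ‖y‖ + ‖x‖ * ‖y ⊓ n • y₀ - y‖ := by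
        intro n
        set a := x ⊓ n • x₀
        set b := y ⊓ n • y₀
        have hsplit : t a b - t x y = t (a - x) b + t x (b - y) := by
          rw [map_sub t a x, LinearMap.sub_apply, map_sub (t x) b y]
          abel
        rw [hsplit]
        calc ‖t (a - x) b + t x (b - y)‖ ≤ ‖t (a - x) b‖ + ‖t x (b - y)‖ := norm_add_le _ _
          _ = ‖a - x‖ * ‖b‖ + ‖x‖ * ‖b - y‖ := by rw [ht.cross_norm, ht.cross_norm]
          _ ≤ ‖a - x‖ * ‖y‖ + ‖x‖ * ‖b - y‖ := by
              have hb0 : 0 ≤ b := le_inf hy (nsmul_nonneg hy₀.1 n)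
              have : ‖b‖ ≤ ‖y‖ := by
                apply HasSolidNorm.solid
                rw [abs_of_nonneg hb0, abs_of_nonneg hy]
                exact inf_le_left
              gcongr
      refine squeeze_zero (fun n => norm_nonneg _) hbound ?_
      have h1 : Tendsto (fun n : ℕ => ‖x ⊓ n • x₀ - x‖) atTop (nhds 0) := by
        rw [← tendsto_iff_norm_sub_tendsto_zero]; exact hax
      have h2 : Tendsto (fun n : ℕ => ‖y ⊓ n • y₀ - y‖) atTop (nhds 0) := by
        rw [← tendsto_iff_norm_sub_tendsto_zero]; exact hby
      have := (h1.mul_const ‖y‖).add (h2.const_mul ‖x‖)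
      simpa using this
    have : t x y ∈ closure (I : Set G) :=
      mem_closure_of_tendsto hconv (Eventually.of_forall hmemI)
    rw [← hJc] at this
    exact this
  -- all elementary tensors lie in J
  have step2 : ∀ (x : E) (y : F), t x y ∈ J := by
    intro x y
    have e1 : t x y = t x⁺ y⁺ - t x⁺ y⁻ - (t x⁻ y⁺ - t x⁻ y⁻) := by
      conv_lhs => rw [← posPart_sub_negPart x, ← posPart_sub_negPart y]
      rw [map_sub t, LinearMap.sub_apply, map_sub (t x⁺), map_sub (t x⁻)]
    rw [e1]
    exact sub_mem
      (sub_mem (step1 _ _ (posPart_nonneg x) (posPart_nonneg y))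
        (step1 _ _ (posPart_nonneg x) (negPart_nonneg y)))
      (sub_mem (step1 _ _ (negPart_nonneg x) (posPart_nonneg y))
        (step1 _ _ (negPart_nonneg x) (negPart_nonneg y)))
  -- J is everything
  have hspan : Submodule.span ℝ (Set.image2 (fun x y => t x y) Set.univ Set.univ) ≤ J := by
    rw [Submodule.span_le]
    rintro z ⟨x, -, y, -, rfl⟩
    exact step2 x y
  have hJall : ∀ z : G, z ∈ closure (I : Set G) := by
    intro z
    have hdense : Dense (J : Set G) := ht.dense_span.mono hspan
    have : z ∈ closure (J : Set G) := hdense z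
    rw [hJc] at this
    rwa [closure_closure] at this
  -- conclusion
  refine ⟨hu, ?_⟩
  intro x hx
  rw [Metric.tendsto_atTop]
  intro ε hε
  obtain ⟨z, hzI, hz⟩ := Metric.mem_closure_iff.1 (hJall x) ε hε
  obtain ⟨m, hm⟩ := hzI
  refine ⟨m, fun n hn => ?_⟩
  set w : G := x ⊓ z⁺ with hw_def
  have hw_le_x : w ≤ x := inf_le_left
  have hzp_abs : z⁺ ≤ |z| := sup_le (le_abs_self z) (abs_nonneg z)
  have hw_le_nu : w ≤ n • u :=
    inf_le_right.trans (hzp_abs.trans (hm.trans (nsmul_le_nsmul_left hu hn)))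
  have hw_le_inf : w ≤ x ⊓ n • u := le_inf hw_le_x hw_le_nu
  have hkey : x - x ⊓ n • u ≤ x - w := sub_le_sub_left hw_le_inf x
  have hxw : x - w ≤ |x - z| := by
    have e2 : x - w = (x - z⁺)⁺ := by
      have h3 : x ⊓ z⁺ + x ⊔ z⁺ = x + z⁺ := inf_add_sup x z⁺
      have h5 : x - x ⊓ z⁺ - (x ⊔ z⁺ - z⁺) = x + z⁺ - (x ⊓ z⁺ + x ⊔ z⁺) := by abel
      rw [h3, sub_self] at h5
      have h4 : x - x ⊓ z⁺ = x ⊔ z⁺ - z⁺ := sub_eq_zero.1 h5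
      rw [hw_def, h4, sup_sub, sub_self]
      exact (posPart_def _).symm
    rw [e2]
    calc (x - z⁺)⁺ ≤ (x - z)⁺ := posPart_mono (sub_le_sub_left le_sup_left x)
      _ ≤ |x - z| := sup_le (le_abs_self _) (abs_nonneg _)
  have hnonneg : 0 ≤ x - x ⊓ n • u := sub_nonneg.2 inf_le_left
  have habs : |x ⊓ n • u - x| ≤ |x - z| := by
    rw [abs_sub_comm, abs_of_nonneg hnonneg]
    exact hkey.trans hxw
  have hnorm : ‖x ⊓ n • u - x‖ ≤ ‖x - z‖ := HasSolidNorm.solid habs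
  calc dist (x ⊓ n • u) x = ‖x ⊓ n • u - x‖ := dist_eq_norm _ _
    _ ≤ ‖x - z‖ := hnorm
    _ = dist x z := (dist_eq_norm _ _).symm
    _ < ε := hz
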